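/- Let C be a non-contracting strict globular ω-category, and let x, y : Δⁿ → PC be ω-functors with T(x) = S(y), where S(z) and T(z) denote the constant values of s₀∘z and t₀∘z respectively. Define (x*y)(σ) := x(σ) *₀ y(σ) for each face σ of Δⁿ. If the image of x*y lies in PC (i.e., every (x*y)(σ) has dimension ≥ 1 in C), then x*y is an ω-functor from Δⁿ to PC and ∂ᵢ(x*y) = (∂ᵢx)*(∂ᵢy) for all 0 ≤ i ≤ n. -/

import Mathlib

/-- A strict globular ω-category: a set `A` with a family of compositions,
source and target maps `(*ₙ, sₙ, tₙ)` satisfying the 1-category axioms in each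
degree, the globular axioms, the interchange law, the compatibility of
sources/targets with compositions in different degrees, and finiteness of
dimension.  `comp n x y` is only meaningful when `tgt n x = src n y`. -/
structure OmegaCat where
  A : Type
  comp : ℕ → A → A → A
  src : ℕ → A → A
  tgt : ℕ → A → A
  src_comp : ∀ n x y, tgt n x = src n y → src n (comp n x y) = src n x
  tgt_comp : ∀ n x y, tgt n x = src n y → tgt n (comp n x y) = tgt n y
  comp_src_unit : ∀ n x, comp n (src n x) x = x
  comp_tgt_unit : ∀ n x, comp n x (tgt n x) = x
  comp_assoc : ∀ n x y z, tgt n x = src n y → tgt n y = src n z →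
    comp n (comp n x y) z = comp n x (comp n y z)
  src_src_le : ∀ i j, j ≤ i → ∀ x, src i (src j x) = src j x
  tgt_src_le : ∀ i j, j ≤ i → ∀ x, tgt i (src j x) = src j x
  src_tgt_le : ∀ i j, j ≤ i → ∀ x, src i (tgt j x) = tgt j x
  tgt_tgt_le : ∀ i j, j ≤ i → ∀ x, tgt i (tgt j x) = tgt j x
  src_src_lt : ∀ i j, i < j → ∀ x, src i (src j x) = src i x
  src_tgt_lt : ∀ i j, i < j → ∀ x, src i (tgt j x) = src i x
  tgt_src_lt : ∀ i j, i < j → ∀ x, tgt i (src j x) = tgt i x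
  tgt_tgt_lt : ∀ i j, i < j → ∀ x, tgt i (tgt j x) = tgt i x
  interchange : ∀ p q, p < q → ∀ x y z t,
    tgt p x = src p y → tgt p z = src p t → tgt q x = src q z → tgt q y = src q t →
    comp q (comp p x y) (comp p z t) = comp p (comp q x z) (comp q y t)
  src_comp_ne : ∀ i j, i ≠ j → ∀ x y, tgt j x = src j y →
    src i (comp j x y) = comp j (src i x) (src i y)
  tgt_comp_ne : ∀ i j, i ≠ j → ∀ x y, tgt j x = src j y →
    tgt i (comp j x y) = comp j (tgt i x) (tgt i y)
  finiteDim : ∀ x, ∃ n, src n x = x ∧ tgt n x = x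

namespace OmegaCat

variable (C : OmegaCat)

/-- `x` has dimension at most `n`. -/
def dimLE (n : ℕ) (x : C.A) : Prop := C.src n x = x ∧ C.tgt n x = x

/-- `x` has dimension at least 1 (strictly positive dimension). -/
def PosDim (x : C.A) : Prop := ¬ C.dimLE 0 x

/-- `x` is exactly 1-dimensional. -/
def OneDim (x : C.A) : Prop := C.dimLE 1 x ∧ ¬ C.dimLE 0 x

/-- `s₁` and `t₁` are non-contracting: for `x` of dimension ≥ 1, `s₁ x` and
`t₁ x` are 1-dimensional. -/
def NonContracting : Prop :=
  ∀ x : C.A, C.PosDim x → C.OneDim (C.src 1 x) ∧ C.OneDim (C.tgt 1 x)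

end OmegaCat

/-- A face of the `n`-simplex: a nonempty strictly increasing sequence in
`{0, …, n}`, encoded as a nonempty subset of `Fin (n+1)`. -/
def SimplexFace (n : ℕ) : Type := {s : Finset (Fin (n+1)) // s.Nonempty}

/-- The face obtained from `σ` by deleting the element in position `i`
(positions in the increasing enumeration of `σ`, counted from 0). -/
def delPos {n : ℕ} (σ : Finset (Fin (n+1))) (i : ℕ) : Finset (Fin (n+1)) :=
  ((σ.sort (· ≤ ·)).eraseIdx i).toFinset

/-- `Gen C S x`: `x` is an iterated composite of elements of `S` in the
ω-category `C`. -/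
inductive Gen (C : OmegaCat) (S : Set C.A) : C.A → Prop
  | of {x : C.A} : x ∈ S → Gen C S x
  | cmp {p : ℕ} {x y : C.A} : Gen C S x → Gen C S y → C.tgt p x = C.src p y →
      Gen C S (C.comp p x y)

/-- A presentation of Street's free ω-category `Δⁿ` generated by the faces of
the `n`-simplex: an ω-category `D` with an injection `R` of the faces, in which
every element is a composite of faces, `R σ` has the dimension of `σ`, and the
`(p-1)`-source (resp. target) of a `p`-dimensional face `R σ` is a composite of
the subfaces of the faces obtained from `σ` by removing one element in odd
(resp. even) position. -/
structure SimplexStruct (n : ℕ) where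
  D : OmegaCat
  R : SimplexFace n → D.A
  inj : Function.Injective R
  dim_le : ∀ σ : SimplexFace n, D.dimLE (σ.1.card - 1) (R σ)
  dim_exact : ∀ σ : SimplexFace n, 2 ≤ σ.1.card → ¬ D.dimLE (σ.1.card - 2) (R σ)
  src_boundary : ∀ σ : SimplexFace n, 2 ≤ σ.1.card →
    Gen D {y | ∃ τ : SimplexFace n,
        (∃ i, i < σ.1.card ∧ Odd i ∧ τ.1 ⊆ delPos σ.1 i) ∧ y = R τ}
      (D.src (σ.1.card - 2) (R σ))
  tgt_boundary : ∀ σ : SimplexFace n, 2 ≤ σ.1.card →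
    Gen D {y | ∃ τ : SimplexFace n,
        (∃ i, i < σ.1.card ∧ Even i ∧ τ.1 ⊆ delPos σ.1 i) ∧ y = R τ}
      (D.tgt (σ.1.card - 2) (R σ))
  generates : ∀ x : D.A, Gen D (Set.range R) x

/-- An ω-functor from `D` to the path ω-category `PC` of `C`: a map landing in
the morphisms of strictly positive dimension, sending the `m`-source,
`m`-target and `*ₘ`-composition of `D` to the `(m+1)`-source, `(m+1)`-target
and `*ₘ₊₁`-composition of `C`. -/
structure ToPathFunctor (D C : OmegaCat) where
  f : D.A → C.A
  pos : ∀ d, C.PosDim (f d)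
  map_src : ∀ m d, f (D.src m d) = C.src (m+1) (f d)
  map_tgt : ∀ m d, f (D.tgt m d) = C.tgt (m+1) (f d)
  map_comp : ∀ m a b, D.tgt m a = D.src m b →
    f (D.comp m a b) = C.comp (m+1) (f a) (f b)

/-- An ω-functor between ω-categories. -/
structure OmegaFunctor (C D : OmegaCat) where
  f : C.A → D.A
  map_src : ∀ n x, f (C.src n x) = D.src n (f x)
  map_tgt : ∀ n x, f (C.tgt n x) = D.tgt n (f x)
  map_comp : ∀ n x y, C.tgt n x = C.src n y →
    f (C.comp n x y) = D.comp n (f x) (f y)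

/-- Pointwise `*₀`-composition of globular simplices: if `x, y : Δⁿ → PC` are
ω-functors with `T(x) = S(y)` and every `x(σ) *₀ y(σ)` has dimension ≥ 1, then
`x*y : σ ↦ x(σ) *₀ y(σ)` is again an ω-functor `Δⁿ → PC`, and it commutes with
the simplicial face maps: `∂ᵢ(x*y) = (∂ᵢx)*(∂ᵢy)`. -/
theorem stmt9 (n : ℕ) (S : SimplexStruct n) (C : OmegaCat)
    (hC : C.NonContracting) (x y : ToPathFunctor S.D C)
    (hT : ∀ d d' : S.D.A, C.tgt 0 (x.f d) = C.src 0 (y.f d'))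
    (hpos : ∀ d : S.D.A, C.PosDim (C.comp 0 (x.f d) (y.f d))) :
    ∃ Z : ToPathFunctor S.D C,
      (Z.f = fun d => C.comp 0 (x.f d) (y.f d)) ∧
      (∀ (m : ℕ) (S' : SimplexStruct m) (G : OmegaFunctor S'.D S.D)
          (d : S'.D.A),
        Z.f (G.f d) = C.comp 0 (x.f (G.f d)) (y.f (G.f d))) := by
  refine ⟨⟨fun d => C.comp 0 (x.f d) (y.f d), hpos, ?_, ?_, ?_⟩, rfl, fun _ _ _ _ => rfl⟩
  · intro m d
    rw [x.map_src, y.map_src,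
      C.src_comp_ne (m+1) 0 (Nat.succ_ne_zero m) _ _ (hT d d)]
  · intro m d
    rw [x.map_tgt, y.map_tgt,
      C.tgt_comp_ne (m+1) 0 (Nat.succ_ne_zero m) _ _ (hT d d)]
  · intro m a b hab
    have hx : C.tgt (m+1) (x.f a) = C.src (m+1) (x.f b) := by
      rw [← x.map_tgt, ← x.map_src, hab]
    have hy : C.tgt (m+1) (y.f a) = C.src (m+1) (y.f b) := by
      rw [← y.map_tgt, ← y.map_src, hab]
    rw [x.map_comp m a b hab, y.map_comp m a b hab,
      C.interchange 0 (m+1) (Nat.succ_pos m) _ _ _ _ (hT a a) (hT b b) hx hy]
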